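/- Let β > 0, ω > 0, set γ = e^(−βω) and η = tanh(βω/2), and let λ be a real number. Define the 2×2 complex matrix 𝔸 = ((1+γ)/2)·[[1, iη],[−iη, 1]] and the 4×4 complex matrix C given in 2×2 blocks by C = [[𝔸, λ𝔸],[λ𝔸, 𝔸]]. Then C is positive semidefinite if and only if λ² ≤ 1. -/

import Mathlib

open scoped ComplexOrder

open Matrix Complex in
lemma psd_smul_real {n : Type*} [Fintype n] {M : Matrix n n ℂ} (hM : M.PosSemidef)
    {c : ℝ} (hc : 0 ≤ c) : ((c : ℂ) • M).PosSemidef := by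
  refine Matrix.PosSemidef.of_dotProduct_mulVec_nonneg ?_ (fun x => ?_)
  · unfold Matrix.IsHermitian
    rw [conjTranspose_smul, hM.1.eq]
    norm_num
  · rw [smul_mulVec, dotProduct_smul]
    exact mul_nonneg (Complex.zero_le_real.2 hc) (hM.dotProduct_mulVec_nonneg x)

open Matrix Complex in
lemma small_psd {η : ℝ} (hη : |η| ≤ 1) :
    (!![1, Complex.I * (η : ℂ); -(Complex.I * (η : ℂ)), 1] : Matrix (Fin 2) (Fin 2) ℂ).PosSemidef := by
  obtain ⟨h1, h2⟩ := abs_le.1 hη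
  have key : (!![1, Complex.I * (η : ℂ); -(Complex.I * (η : ℂ)), 1] : Matrix (Fin 2) (Fin 2) ℂ)
      = (((1+η)/2 : ℝ) : ℂ) • (!![(1:ℂ), Complex.I; 0, 0]ᴴ * !![(1:ℂ), Complex.I; 0, 0])
      + (((1-η)/2 : ℝ) : ℂ) • (!![(1:ℂ), -Complex.I; 0, 0]ᴴ * !![(1:ℂ), -Complex.I; 0, 0]) := by
    ext i j
    fin_cases i <;> fin_cases j <;>
      simp [Matrix.mul_apply, Fin.sum_univ_two, Complex.ext_iff] <;> ring
  rw [key]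
  exact (psd_smul_real (posSemidef_conjTranspose_mul_self _) (by linarith)).add
    (psd_smul_real (posSemidef_conjTranspose_mul_self _) (by linarith))

open Matrix in
lemma block_psd {n : Type*} [Fintype n] [DecidableEq n] {A : Matrix n n ℂ} (hA : A.PosSemidef)
    {lam : ℝ} (hlam : |lam| ≤ 1) :
    (Matrix.fromBlocks A ((lam : ℂ) • A) ((lam : ℂ) • A) A).PosSemidef := by
  obtain ⟨h1, h2⟩ := abs_le.1 hlam
  set B₁ : Matrix (n ⊕ n) n ℂ := fromRows 1 1 with hB₁
  set B₂ : Matrix (n ⊕ n) n ℂ := fromRows 1 (-1) with hB₂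
  have e₁ : B₁ * A * B₁ᴴ = fromBlocks A A A A := by
    rw [hB₁, conjTranspose_fromRows_eq_fromCols_conjTranspose, fromRows_mul,
      conjTranspose_one, fromRows_mul_fromCols]
    simp
  have e₂ : B₂ * A * B₂ᴴ = fromBlocks A (-A) (-A) A := by
    rw [hB₂, conjTranspose_fromRows_eq_fromCols_conjTranspose, fromRows_mul,
      conjTranspose_neg, conjTranspose_one, fromRows_mul_fromCols]
    simp
  have hc1 : (((1+lam)/2 : ℝ) : ℂ) + (((1-lam)/2 : ℝ) : ℂ) = 1 := by push_cast; ring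
  have hc2 : (((1+lam)/2 : ℝ) : ℂ) - (((1-lam)/2 : ℝ) : ℂ) = (lam : ℂ) := by push_cast; ring
  have key : Matrix.fromBlocks A ((lam : ℂ) • A) ((lam : ℂ) • A) A
      = (((1+lam)/2 : ℝ) : ℂ) • (B₁ * A * B₁ᴴ) + (((1-lam)/2 : ℝ) : ℂ) • (B₂ * A * B₂ᴴ) := by
    rw [e₁, e₂, Matrix.fromBlocks_smul, Matrix.fromBlocks_smul, Matrix.fromBlocks_add]
    have hd : (((1+lam)/2 : ℝ) : ℂ) • A + (((1-lam)/2 : ℝ) : ℂ) • A = A := by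
      rw [← add_smul, hc1, one_smul]
    have ho : (((1+lam)/2 : ℝ) : ℂ) • A + (((1-lam)/2 : ℝ) : ℂ) • (-A) = (lam : ℂ) • A := by
      rw [smul_neg, ← sub_eq_add_neg, ← sub_smul, hc2]
    rw [hd, ho]
  rw [key]
  exact (psd_smul_real (hA.mul_mul_conjTranspose_same B₁) (by linarith)).add
    (psd_smul_real (hA.mul_mul_conjTranspose_same B₂) (by linarith))

/-- The Kossakowski matrix `C = [[𝔸, λ𝔸],[λ𝔸, 𝔸]]`, with
`𝔸 = ((1+γ)/2)·[[1, iη],[−iη, 1]]`, `γ = e^{−βω}`, `η = tanh(βω/2)`,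
is positive semidefinite if and only if `λ² ≤ 1`. -/
theorem kossakowski_psd_iff (β ω : ℝ) (hβ : 0 < β) (hω : 0 < ω) (γ η lam : ℝ)
    (hγ : γ = Real.exp (-(β * ω))) (hη : η = Real.tanh (β * ω / 2))
    (A : Matrix (Fin 2) (Fin 2) ℂ)
    (hA : A = (((1 + γ) / 2 : ℝ) : ℂ) •
      !![1, Complex.I * (η : ℂ); -(Complex.I * (η : ℂ)), 1]) :
    (Matrix.fromBlocks A ((lam : ℂ) • A) ((lam : ℂ) • A) A).PosSemidef ↔ lam ^ 2 ≤ 1 := by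
  have ha : 0 < (1 + γ) / 2 := by
    rw [hγ]; positivity
  have hηle : |η| ≤ 1 := by
    rw [hη, Real.tanh_eq_sinh_div_cosh, abs_div, abs_of_pos (Real.cosh_pos _),
      div_le_one (Real.cosh_pos _), Real.abs_sinh]
    calc Real.sinh |β * ω / 2| ≤ Real.cosh |β * ω / 2| := (Real.sinh_lt_cosh _).le
      _ = Real.cosh (β * ω / 2) := Real.cosh_abs _
  constructor
  · intro hC
    set x : Fin 2 ⊕ Fin 2 → ℂ := Sum.elim ![1, 0] ![(-lam : ℂ), 0] with hxdef
    have h := hC.dotProduct_mulVec_nonneg x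
    have hx : dotProduct (star x)
        ((Matrix.fromBlocks A ((lam : ℂ) • A) ((lam : ℂ) • A) A).mulVec x)
        = (((1 + γ) / 2 * (1 - lam ^ 2) : ℝ) : ℂ) := by
      subst hA
      simp [hxdef, dotProduct, Matrix.mulVec, Fintype.sum_sum_type, Fin.sum_univ_two,
        Matrix.fromBlocks]
      ring
    rw [hx, Complex.zero_le_real] at h
    nlinarith
  · intro h
    have hApsd : A.PosSemidef := by
      rw [hA]; exact psd_smul_real (small_psd hηle) ha.le
    exact block_psd hApsd ((sq_le_one_iff_abs_le_one lam).1 h)
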